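/- Fix a ∈ (0, 1/2) and let C_a = {(1−a)·Σ_{j=0}^∞ ε_j a^j : ε_j ∈ {0,1} for all j} ⊂ ℝ. If k is a positive integer with k ≥ (1−a)/a, then for every nonempty compact set E ⊂ ℝ, the lower Minkowski dimension satisfies dim_m(C_a + E) ≥ 1/k + ((k−1)/k)·dim_m(E). -/

import Mathlib

open Filter Set Pointwise

/-- The minimal number of intervals of length `δ` needed to cover `A ⊆ ℝ`. -/
noncomputable def coverNumber (A : Set ℝ) (δ : ℝ) : ℕ :=
  sInf {N : ℕ | ∃ C : Finset ℝ, C.card = N ∧ A ⊆ ⋃ x ∈ C, Set.Icc x (x + δ)}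

/-- The lower Minkowski dimension of a set `A ⊆ ℝ`: the liminf as `δ → 0⁺` of
`log N(A, δ) / log (1/δ)`. -/
noncomputable def lowerMinkDim (A : Set ℝ) : ℝ :=
  liminf (fun δ : ℝ => Real.log (coverNumber A δ) / Real.log (1 / δ)) (nhdsWithin 0 (Set.Ioi 0))

/-- The homogeneous Cantor set `C_a = {(1-a) ∑ εⱼ aʲ : εⱼ ∈ {0,1}}`. -/
def homCantor (a : ℝ) : Set ℝ :=
  {x | ∃ ε : ℕ → ℝ, (∀ j, ε j = 0 ∨ ε j = 1) ∧ x = (1 - a) * ∑' j : ℕ, ε j * a ^ j}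



/-! ### coverNumber API -/

lemma coverNumber_le_of_cover {A : Set ℝ} {δ : ℝ} {C : Finset ℝ}
    (h : A ⊆ ⋃ x ∈ C, Set.Icc x (x + δ)) : coverNumber A δ ≤ C.card :=
  Nat.sInf_le ⟨C, rfl, h⟩

lemma Icc_subset_cover {l u δ : ℝ} (hδ : 0 < δ) :
    Set.Icc l u ⊆ ⋃ x ∈ (Finset.range (⌊(u - l)/δ⌋₊ + 1)).image (fun i : ℕ => l + i * δ),
      Set.Icc x (x + δ) := by
  intro x hx
  obtain ⟨hlx, hxu⟩ := hx
  have hnn : 0 ≤ (x - l)/δ := div_nonneg (by linarith) hδ.le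
  set i := ⌊(x - l)/δ⌋₊ with hi
  have h1 : ((i : ℝ)) * δ ≤ x - l := (le_div_iff₀ hδ).mp (Nat.floor_le hnn)
  have h2 : x - l < ((i : ℝ) + 1) * δ := (div_lt_iff₀ hδ).mp (Nat.lt_floor_add_one _)
  have hile : i ≤ ⌊(u - l)/δ⌋₊ := Nat.floor_le_floor (by gcongr <;> linarith)
  refine Set.mem_iUnion₂.mpr ⟨l + i * δ, ?_, ?_⟩
  · exact Finset.mem_image.mpr ⟨i, Finset.mem_range.mpr (by omega), rfl⟩
  · exact ⟨by linarith, by nlinarith⟩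

lemma coverNumber_le_interval {A : Set ℝ} {l u δ : ℝ} (hδ : 0 < δ) (hA : A ⊆ Set.Icc l u) :
    coverNumber A δ ≤ ⌊(u - l)/δ⌋₊ + 1 := by
  refine le_trans (coverNumber_le_of_cover (hA.trans (Icc_subset_cover hδ))) ?_
  exact le_trans (Finset.card_image_le) (by simp)

lemma exists_optimal_cover {A : Set ℝ} {l u : ℝ} (δ : ℝ) (hδ : 0 < δ) (hA : A ⊆ Set.Icc l u) :
    ∃ C : Finset ℝ, C.card = coverNumber A δ ∧ A ⊆ ⋃ x ∈ C, Set.Icc x (x + δ) := by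
  have hne : {N : ℕ | ∃ C : Finset ℝ, C.card = N ∧ A ⊆ ⋃ x ∈ C, Set.Icc x (x + δ)}.Nonempty :=
    ⟨_, _, rfl, hA.trans (Icc_subset_cover hδ)⟩
  exact Nat.sInf_mem hne

lemma one_le_coverNumber {A : Set ℝ} {l u δ : ℝ} (hδ : 0 < δ) (hA : A ⊆ Set.Icc l u)
    (hne : A.Nonempty) : 1 ≤ coverNumber A δ := by
  obtain ⟨C, hC, hcov⟩ := exists_optimal_cover δ hδ hA
  rcases Nat.eq_zero_or_pos (coverNumber A δ) with h0 | h1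
  · exfalso
    rw [h0, Finset.card_eq_zero] at hC
    obtain ⟨x, hx⟩ := hne
    have := hcov hx
    simp [hC] at this
  · exact h1

lemma coverNumber_anti {A : Set ℝ} {l u δ δ' : ℝ} (hδ : 0 < δ) (h : δ ≤ δ')
    (hA : A ⊆ Set.Icc l u) : coverNumber A δ' ≤ coverNumber A δ := by
  obtain ⟨C, hC, hcov⟩ := exists_optimal_cover δ hδ hA
  rw [← hC]
  refine coverNumber_le_of_cover (hcov.trans ?_)
  refine Set.iUnion₂_mono fun x _ => ?_
  exact Set.Icc_subset_Icc le_rfl (by linarith)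

lemma coverNumber_mono {A B : Set ℝ} {l u δ : ℝ} (hδ : 0 < δ) (h : A ⊆ B)
    (hB : B ⊆ Set.Icc l u) : coverNumber A δ ≤ coverNumber B δ := by
  obtain ⟨C, hC, hcov⟩ := exists_optimal_cover δ hδ hB
  rw [← hC]
  exact coverNumber_le_of_cover (h.trans hcov)
/-! ### The finite Cantor approximations -/

noncomputable def Vfin (a : ℝ) : ℕ → Finset ℝ
  | 0 => {0}
  | (n+1) => ({0, 1-a} : Finset ℝ) + (Vfin a n).image (fun y => a * y)

lemma Vfin_zero (a : ℝ) : Vfin a 0 = {0} := rfl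

lemma Vfin_succ (a : ℝ) (n : ℕ) :
    Vfin a (n+1) = ({0, 1-a} : Finset ℝ) + (Vfin a n).image (fun y => a * y) := rfl

lemma Vfin_nonempty (a : ℝ) (n : ℕ) : (Vfin a n).Nonempty := by
  induction n with
  | zero => exact ⟨0, by simp [Vfin_zero]⟩
  | succ n ih =>
    rw [Vfin_succ]
    exact Finset.Nonempty.add (by simp) (ih.image _)

/-- Members of `Vfin a n` are finite digit sums. -/
lemma Vfin_mem_structure {a : ℝ} (n : ℕ) :
    ∀ x ∈ Vfin a n, ∃ ε : ℕ → ℝ, (∀ j, ε j = 0 ∨ ε j = 1) ∧ (∀ j, n ≤ j → ε j = 0) ∧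
      x = (1 - a) * ∑ j ∈ Finset.range n, ε j * a ^ j := by
  induction n with
  | zero =>
    intro x hx
    rw [Vfin_zero, Finset.mem_singleton] at hx
    exact ⟨fun _ => 0, fun _ => Or.inl rfl, fun _ _ => rfl, by simp [hx]⟩
  | succ n ih =>
    intro x hx
    rw [Vfin_succ] at hx
    obtain ⟨d, hd, z, hz, hdzx⟩ := Finset.mem_add.mp hx
    obtain ⟨y, hy, hyz⟩ := Finset.mem_image.mp hz
    obtain ⟨ε, hε01, hεz, hεy⟩ := ih y hy
    have hd' : d = 0 ∨ d = 1 - a := by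
      rcases Finset.mem_insert.mp hd with h | h
      · exact Or.inl h
      · exact Or.inr (Finset.mem_singleton.mp h)
    set e0 : ℝ := if d = 0 ∧ ¬ (1 - a = 0) then 0 else 1 with he0
    -- define new digit sequence
    refine ⟨fun j => Nat.rec e0 (fun m _ => ε m) j, ?_, ?_, ?_⟩
    · intro j
      cases j with
      | zero =>
        by_cases h : d = 0 ∧ ¬ (1 - a = 0)
        · simp [he0, h]
        · simp [he0, h]
      | succ m => exact hε01 m
    · intro j hj
      cases j with
      | zero => omega
      | succ m => exact hεz m (by omega)
    · -- sum identity
      rw [Finset.sum_range_succ']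
      have hd0 : d = (1-a) * e0 := by
        rcases hd' with h | h
        · by_cases h1 : (1:ℝ) - a = 0
          · simp [he0, h, h1]
          · simp [he0, h, h1]
        · by_cases h1 : (1:ℝ) - a = 0
          · simp [he0, h, h1]
          · have : ¬ (d = 0 ∧ ¬ (1 - a = 0)) := by
              intro hc; rw [h] at hc; exact h1 hc.1
            simp [he0, this, h]
      have : ∑ i ∈ Finset.range n, (fun j => Nat.rec e0 (fun m _ => ε m) j) (i+1) * a ^ (i+1)
          = a * ∑ j ∈ Finset.range n, ε j * a ^ j := by
        rw [Finset.mul_sum]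
        refine Finset.sum_congr rfl fun i _ => ?_
        ring
      rw [this]
      rw [← hdzx, ← hyz, hεy]
      have h0 : ((fun j => Nat.rec e0 (fun m _ => ε m) j) 0 : ℝ) = e0 := rfl
      rw [h0, hd0]
      ring
lemma Vfin_subset_homCantor {a : ℝ} (n : ℕ) : ∀ x ∈ Vfin a n, x ∈ homCantor a := by
  intro x hx
  obtain ⟨ε, hε01, hεz, hεx⟩ := Vfin_mem_structure n x hx
  refine ⟨ε, hε01, ?_⟩
  rw [hεx]
  congr 1
  rw [tsum_eq_sum (s := Finset.range n) (fun j hj => ?_)]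
  rw [hεz j (by simpa using hj)]
  ring

lemma homCantor_subset_Icc {a : ℝ} (ha0 : 0 < a) (ha1 : a < 1) :
    homCantor a ⊆ Set.Icc 0 1 := by
  rintro x ⟨ε, hε01, rfl⟩
  have hsum : Summable (fun j : ℕ => ε j * a ^ j) := by
    apply Summable.of_nonneg_of_le (fun j => ?_) (fun j => ?_)
      (summable_geometric_of_lt_one ha0.le ha1)
    · rcases hε01 j with h | h <;> simp [h, pow_nonneg ha0.le]
    · rcases hε01 j with h | h <;> simp [h, pow_nonneg ha0.le, (pow_pos ha0 j).le]
  constructor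
  · apply mul_nonneg (by linarith)
    apply tsum_nonneg
    intro j
    rcases hε01 j with h | h <;> simp [h, pow_nonneg ha0.le]
  · have hle : (∑' j : ℕ, ε j * a ^ j) ≤ ∑' j : ℕ, a ^ j := by
      apply Summable.tsum_le_tsum (fun j => ?_) hsum (summable_geometric_of_lt_one ha0.le ha1)
      rcases hε01 j with h | h <;> simp [h, pow_nonneg ha0.le, (pow_pos ha0 j).le]
    rw [tsum_geometric_of_lt_one ha0.le ha1] at hle
    calc (1 - a) * ∑' j : ℕ, ε j * a ^ j ≤ (1-a) * (1-a)⁻¹ := by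
          apply mul_le_mul_of_nonneg_left hle (by linarith)
      _ = 1 := mul_inv_cancel₀ (by linarith)

lemma zero_mem_homCantor (a : ℝ) : (0:ℝ) ∈ homCantor a :=
  ⟨fun _ => 0, fun _ => Or.inl rfl, by simp⟩
/-! ### nsmul helpers and the net property -/

lemma zero_mem_nsmul {α : Type*} [DecidableEq α] [AddCommMonoid α] {s : Finset α}
    (h : (0:α) ∈ s) (k : ℕ) : (0:α) ∈ k • s := by
  induction k with
  | zero => simp [Finset.mem_zero]
  | succ k ih =>
    rw [succ_nsmul]
    simpa using Finset.add_mem_add ih h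

lemma nat_mul_mem_nsmul_pair {c : ℝ} (k : ℕ) : ∀ d : ℕ, d ≤ k →
    (d:ℝ) * c ∈ k • ({0, c} : Finset ℝ) := by
  induction k with
  | zero => intro d hd; interval_cases d; simp [Finset.mem_zero]
  | succ k ih =>
    intro d hd
    rw [succ_nsmul]
    rcases Nat.lt_or_ge d (k+1) with h | h
    · have hmem := ih d (by omega)
      have h0 : (0:ℝ) ∈ ({0, c} : Finset ℝ) := by simp
      simpa using Finset.add_mem_add hmem h0
    · have hdk : d = k + 1 := le_antisymm hd h
      have hmem := ih k le_rfl
      have hc : c ∈ ({0, c} : Finset ℝ) := by simp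
      have hadd := Finset.add_mem_add hmem hc
      have heq : (k:ℝ) * c + c = (d:ℝ) * c := by rw [hdk]; push_cast; ring
      rwa [heq] at hadd

lemma mul_mem_nsmul_image (a : ℝ) (V : Finset ℝ) (k : ℕ) :
    ∀ y ∈ k • V, a * y ∈ k • V.image (fun v => a * v) := by
  induction k with
  | zero =>
    intro y hy
    rw [Finset.mem_zero.mp hy]
    simp [Finset.mem_zero]
  | succ k ih =>
    intro y hy
    rw [succ_nsmul] at hy ⊢
    obtain ⟨y₁, hy₁, v, hv, hsum⟩ := Finset.mem_add.mp hy
    have h1 := ih y₁ hy₁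
    have h2 : a * v ∈ V.image (fun v => a * v) := Finset.mem_image_of_mem _ hv
    have h3 := Finset.add_mem_add h1 h2
    rwa [show a * y₁ + a * v = a * y by rw [← hsum]; ring] at h3

/-- Greedy digit expansion: `k`-fold sums of `Vfin a n` form a net of `[0, k(1-aⁿ)]`. -/
lemma cantor_net {a : ℝ} {k : ℕ} (ha0 : 0 < a) (ha1 : a < 1) (hka : 1 - a ≤ k * a) :
    ∀ n : ℕ, ∀ x : ℝ, 0 ≤ x → x ≤ k * (1 - a^n) →
      ∃ y ∈ k • Vfin a n, |x - y| ≤ k * n * a^n := by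
  intro n
  induction n with
  | zero =>
    intro x hx0 hx1
    have hx : x = 0 := le_antisymm (by simpa using hx1) hx0
    exact ⟨0, zero_mem_nsmul (by simp [Vfin_zero]) k, by simp [hx]⟩
  | succ n ih =>
    intro x hx0 hx1
    have h1a : (0:ℝ) < 1 - a := by linarith
    have hxd : 0 ≤ x / (1-a) := div_nonneg hx0 h1a.le
    set d : ℕ := min k ⌊x/(1-a)⌋₊ with hd
    have hdk : d ≤ k := min_le_left _ _
    have hdle : (d:ℝ) * (1-a) ≤ x := by
      have h1 : (d:ℝ) ≤ (⌊x/(1-a)⌋₊ : ℝ) := Nat.cast_le.mpr (min_le_right _ _)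
      have h2 : ((⌊x/(1-a)⌋₊ : ℝ)) ≤ x/(1-a) := Nat.floor_le hxd
      calc (d:ℝ) * (1-a) ≤ (x/(1-a)) * (1-a) :=
            mul_le_mul_of_nonneg_right (h1.trans h2) h1a.le
        _ = x := div_mul_cancel₀ x h1a.ne'
    set r : ℝ := x - d * (1-a) with hr
    have hr0 : 0 ≤ r := by rw [hr]; linarith
    have hank : a^n ≤ 1 := pow_le_one₀ ha0.le ha1.le
    have hkr : (0:ℝ) ≤ k := Nat.cast_nonneg k
    have hrka : r ≤ k * a := by
      rcases le_or_gt k ⌊x/(1-a)⌋₊ with h | h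
      · have hdk' : d = k := min_eq_left h
        have hx1' : x ≤ (k:ℝ) * (1 - a^(n+1)) := hx1
        have hpow : a^(n+1) = a * a^n := by rw [pow_succ]; ring
        have hpnn : 0 ≤ a^(n+1) := pow_nonneg ha0.le _
        rw [hr, hdk']
        nlinarith
      · have hdf : d = ⌊x/(1-a)⌋₊ := min_eq_right h.le
        have hfl : x/(1-a) < (⌊x/(1-a)⌋₊:ℝ) + 1 := Nat.lt_floor_add_one _
        have hxlt : x < ((d:ℝ)+1)*(1-a) := by
          rw [hdf]
          calc x = (x/(1-a))*(1-a) := (div_mul_cancel₀ x h1a.ne').symm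
            _ < ((⌊x/(1-a)⌋₊:ℝ) + 1)*(1-a) := mul_lt_mul_of_pos_right hfl h1a
        have hrlt : r < 1 - a := by rw [hr]; nlinarith
        linarith
    have hra : r / a ≤ k := (div_le_iff₀ ha0).mpr (by linarith)
    set x' : ℝ := min (r/a) (k*(1-a^n)) with hx'
    have hx'0 : 0 ≤ x' := le_min (div_nonneg hr0 ha0.le) (by nlinarith)
    have hx'le : x' ≤ k*(1-a^n) := min_le_right _ _
    have hx'ra : x' ≤ r/a := min_le_left _ _
    have hdiff : r/a - x' ≤ k * a^n := by
      by_cases hc : r/a ≤ k*(1-a^n)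
      · rw [hx', min_eq_left hc]; nlinarith [pow_nonneg ha0.le n]
      · rw [hx', min_eq_right (le_of_not_ge hc)]; nlinarith
    obtain ⟨y', hy'mem, hy'val⟩ := ih x' hx'0 hx'le
    refine ⟨(d:ℝ)*(1-a) + a * y', ?_, ?_⟩
    · rw [Vfin_succ, nsmul_add]
      exact Finset.add_mem_add (nat_mul_mem_nsmul_pair k d hdk)
        (mul_mem_nsmul_image a _ k y' hy'mem)
    · have hkey : x - ((d:ℝ)*(1-a) + a*y') = a * (r/a - y') := by
        rw [hr]; field_simp; ring
      rw [hkey, abs_mul, abs_of_pos ha0]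
      have h1 : |r/a - x'| ≤ k * a^n := by
        rw [abs_of_nonneg (by linarith)]; exact hdiff
      have habs : |r/a - y'| ≤ k*a^n + k*n*a^n :=
        (abs_sub_le _ x' _).trans (add_le_add h1 hy'val)
      calc a * |r/a - y'| ≤ a * (k*a^n + k*n*a^n) :=
            mul_le_mul_of_nonneg_left habs ha0.le
        _ = (k:ℝ)*((n:ℝ)+1)*a^(n+1) := by ring
        _ = (k:ℝ)*((n+1 : ℕ):ℝ)*a^(n+1) := by push_cast; ring
/-! ### Separated sets and discretization -/

lemma floor_sep_inj {T : Finset ℝ} {ρ δ : ℝ} (hδ : 0 < δ) (hρδ : δ ≤ ρ)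
    (hsep : ∀ x ∈ T, ∀ y ∈ T, x ≠ y → ρ ≤ |x - y|) :
    Set.InjOn (fun x : ℝ => ⌊x/δ⌋) T := by
  have key : ∀ x ∈ T, ∀ y ∈ T, x < y → (⌊x/δ⌋ : ℤ) < ⌊y/δ⌋ := by
    intro x hx y hy hlt
    have hs := hsep x hx y hy hlt.ne
    rw [abs_sub_comm, abs_of_nonneg (by linarith)] at hs
    have hxy : x + δ ≤ y := by linarith
    have h1 : x/δ + 1 ≤ y/δ := by
      have : (x + δ)/δ ≤ y/δ := by gcongr
      rw [add_div, div_self hδ.ne'] at this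
      linarith
    have h2 := Int.floor_le_floor h1
    rw [Int.floor_add_one] at h2
    omega
  intro x hx y hy hxy
  by_contra hne
  rcases lt_or_gt_of_ne hne with h | h
  · exact absurd hxy (key x hx y hy h).ne
  · exact absurd hxy.symm (key y hy x hx h).ne

lemma exists_maximal_separated {E : Set ℝ} {l u ρ : ℝ} (hE : E.Nonempty)
    (hElu : E ⊆ Set.Icc l u) (hρ : 0 < ρ) :
    ∃ S : Finset ℝ, ↑S ⊆ E ∧ S.Nonempty ∧
      (∀ x ∈ S, ∀ y ∈ S, x ≠ y → ρ ≤ |x - y|) ∧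
      (∀ e ∈ E, ∃ s ∈ S, |e - s| < ρ) := by
  classical
  set P : Set ℕ := {N | ∃ T : Finset ℝ, ↑T ⊆ E ∧
    (∀ x ∈ T, ∀ y ∈ T, x ≠ y → ρ ≤ |x - y|) ∧ T.card = N} with hP
  obtain ⟨e, he⟩ := hE
  have hP1 : 1 ∈ P := by
    refine ⟨{e}, by simpa using he, ?_, Finset.card_singleton e⟩
    intro x hx y hy hxy
    rw [Finset.mem_singleton] at hx hy
    exact absurd (hx.trans hy.symm) hxy
  have hbdd : BddAbove P := by
    refine ⟨(Finset.Icc ⌊l/ρ⌋ ⌊u/ρ⌋).card, ?_⟩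
    rintro N ⟨T, hTE, hTsep, rfl⟩
    rw [← Finset.card_image_of_injOn (floor_sep_inj hρ le_rfl hTsep)]
    apply Finset.card_le_card
    intro z hz
    obtain ⟨x, hx, rfl⟩ := Finset.mem_image.mp hz
    have hxE := hElu (hTE hx)
    rw [Finset.mem_Icc]
    constructor
    · exact Int.floor_le_floor (by gcongr; exact hxE.1)
    · exact Int.floor_le_floor (by gcongr; exact hxE.2)
  have hmem : sSup P ∈ P := Nat.sSup_mem ⟨1, hP1⟩ hbdd
  obtain ⟨T, hTE, hTsep, hTcard⟩ := hmem
  have hone : 1 ≤ sSup P := le_csSup hbdd hP1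
  refine ⟨T, hTE, Finset.card_pos.mp (by omega), hTsep, ?_⟩
  by_contra hcon
  push_neg at hcon
  obtain ⟨e', he'E, he'sep⟩ := hcon
  have he'T : e' ∉ T := by
    intro hmem
    have := he'sep e' hmem
    simp at this
    linarith
  have hP' : T.card + 1 ∈ P := by
    refine ⟨insert e' T, ?_, ?_, by rw [Finset.card_insert_of_notMem he'T]⟩
    · intro x hx
      rcases Finset.mem_coe.mp hx |> Finset.mem_insert.mp with h | h
      · rw [h]; exact he'E
      · exact hTE h
    · intro x hx y hy hxy
      rcases Finset.mem_insert.mp hx with h1 | h1 <;>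
        rcases Finset.mem_insert.mp hy with h2 | h2
      · exact absurd (h1.trans h2.symm) hxy
      · rw [h1]; exact he'sep y h2
      · rw [h2, abs_sub_comm]; exact he'sep x h1
      · exact hTsep x h1 y h2 hxy
  have := le_csSup hbdd hP'
  omega

lemma nsmul_floor_approx {δ : ℝ} (hδ : 0 < δ) (V : Finset ℝ) (kk : ℕ) :
    ∀ y ∈ kk • V, ∃ z ∈ kk • (V.image fun v => ⌊v/δ⌋), |y/δ - (z:ℝ)| ≤ (kk:ℝ) := by
  induction kk with
  | zero =>
    intro y hy
    rw [Finset.mem_zero.mp hy]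
    exact ⟨0, Finset.mem_zero.mpr rfl, by simp⟩
  | succ kk ih =>
    intro y hy
    rw [succ_nsmul] at hy
    obtain ⟨y₁, hy₁, v, hv, hsum⟩ := Finset.mem_add.mp hy
    obtain ⟨z₁, hz₁, hz₁val⟩ := ih y₁ hy₁
    refine ⟨z₁ + ⌊v/δ⌋, ?_, ?_⟩
    · rw [succ_nsmul]
      exact Finset.add_mem_add hz₁ (Finset.mem_image_of_mem _ hv)
    · have hfl : |v/δ - (⌊v/δ⌋:ℝ)| ≤ 1 := by
        rw [abs_of_nonneg (by linarith [Int.floor_le (v/δ)])]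
        linarith [Int.lt_floor_add_one (v/δ)]
      have : y/δ - ((z₁ + ⌊v/δ⌋ : ℤ):ℝ) = (y₁/δ - z₁) + (v/δ - ⌊v/δ⌋) := by
        rw [← hsum]; push_cast; ring
      rw [this]
      calc |(y₁/δ - z₁) + (v/δ - (⌊v/δ⌋:ℝ))| ≤ |y₁/δ - (z₁:ℝ)| + |v/δ - (⌊v/δ⌋:ℝ)| :=
            abs_add_le _ _
        _ ≤ kk + 1 := add_le_add hz₁val hfl
        _ = ((kk + 1 : ℕ):ℝ) := by push_cast; ring
/-! ### The main counting inequality -/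

lemma floor_mul_bounds {δ x : ℝ} (hδ : 0 < δ) :
    x - δ < δ * ⌊x/δ⌋ ∧ δ * (⌊x/δ⌋:ℝ) ≤ x := by
  constructor
  · have h1 := Int.lt_floor_add_one (x/δ)
    have h2 : x/δ * δ < ((⌊x/δ⌋:ℝ)+1) * δ := mul_lt_mul_of_pos_right h1 hδ
    rw [div_mul_cancel₀ x hδ.ne'] at h2
    nlinarith
  · have h1 := Int.floor_le (x/δ)
    have h2 : ((⌊x/δ⌋:ℝ)) * δ ≤ x/δ * δ := mul_le_mul_of_nonneg_right h1 hδ.le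
    rw [div_mul_cancel₀ x hδ.ne'] at h2
    linarith

set_option maxHeartbeats 1000000 in
lemma main_count {a : ℝ} {k : ℕ} (ha0 : 0 < a) (ha2 : a < 1/2) (hk2 : 2 ≤ k)
    (hka : 1 - a ≤ k * a) {E : Set ℝ} (hEne : E.Nonempty) {l u : ℝ}
    (hElu : E ⊆ Set.Icc l u) (n : ℕ) (hn : 1 ≤ n) :
    coverNumber E (8 * a^n) ^ (k-1) * ⌊1/(((2*(k*n+k+1)+2 : ℕ) : ℝ) * a^n)⌋₊ ≤
      (4 * coverNumber (homCantor a + E) (a^n)) ^ k := by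
  classical
  have ha1 : a < 1 := by linarith
  set δ : ℝ := a^n with hδdef
  have hδ : 0 < δ := pow_pos ha0 n
  -- maximal 4δ-separated subset of E
  obtain ⟨S, hSE, hSne, hSsep, hScov⟩ :=
    exists_maximal_separated (ρ := 4*δ) hEne hElu (by positivity)
  -- coverNumber E (8δ) ≤ S.card
  have hcovE : coverNumber E (8*δ) ≤ S.card := by
    have hcov : E ⊆ ⋃ x ∈ S.image (fun s => s - 4*δ), Set.Icc x (x + 8*δ) := by
      intro e he
      obtain ⟨s, hs, hes⟩ := hScov e he
      rw [abs_lt] at hes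
      refine Set.mem_iUnion₂.mpr ⟨s - 4*δ, Finset.mem_image_of_mem _ hs, ?_, ?_⟩
      · linarith [hes.2]
      · linarith [hes.1]
    exact le_trans (coverNumber_le_of_cover hcov) Finset.card_image_le
  -- discretize
  set S' : Finset ℤ := S.image (fun x => ⌊x/δ⌋) with hS'def
  set V : Finset ℝ := Vfin a n with hVdef
  set V' : Finset ℤ := V.image (fun v => ⌊v/δ⌋) with hV'def
  have hS'card : S'.card = S.card :=
    Finset.card_image_of_injOn (floor_sep_inj hδ (by linarith) hSsep)
  have hS'ne : S'.Nonempty := hSne.image _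
  -- Plünnecke-Ruzsa
  have hplu := Finset.pluennecke_ruzsa_inequality_nsmul_add hS'ne V' k
  -- derive the Nat inequality  (k•V').card * S'.card^(k-1) ≤ (S'+V').card^k
  have hS0 : ((S'.card : ℚ≥0)) ≠ 0 := by
    simp only [ne_eq, Nat.cast_eq_zero, Finset.card_eq_zero]
    exact hS'ne.ne_empty
  have hplu2 : ((k • V').card : ℚ≥0) * (S'.card : ℚ≥0)^(k-1) ≤
      ((S' + V').card : ℚ≥0)^k := by
    have hk1 : k - 1 + 1 = k := by omega
    calc ((k • V').card : ℚ≥0) * (S'.card : ℚ≥0)^(k-1)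
        ≤ (((S' + V').card : ℚ≥0) / S'.card)^k * S'.card * (S'.card : ℚ≥0)^(k-1) := by
          exact mul_le_mul_left hplu _
      _ = ((S' + V').card : ℚ≥0)^k / (S'.card : ℚ≥0)^k * (S'.card : ℚ≥0)^k := by
          rw [div_pow, mul_assoc, ← pow_succ' (S'.card : ℚ≥0) (k-1), hk1]
      _ = ((S' + V').card : ℚ≥0)^k := div_mul_cancel₀ _ (pow_ne_zero k hS0)
  have hpluN : (k • V').card * S'.card^(k-1) ≤ (S' + V').card^k := by
    exact_mod_cast hplu2
  -- net property gives a lower bound on (k • V').card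
  set W : ℕ := k*n+k+1 with hWdef
  have hnet : ∀ x : ℝ, 0 ≤ x → x ≤ 1 → ∃ z ∈ k • V', |x/δ - (z:ℝ)| ≤ (W:ℝ) := by
    intro x hx0 hx1
    have hank : a^n ≤ a := pow_le_of_le_one ha0.le ha1.le (by omega)
    have h1k : (1:ℝ) ≤ k * (1 - a^n) := by
      have : (2:ℝ) ≤ k := by exact_mod_cast hk2
      nlinarith
    obtain ⟨y, hymem, hyval⟩ := cantor_net ha0 ha1 hka n x hx0 (by linarith)
    obtain ⟨z, hzmem, hzval⟩ := nsmul_floor_approx hδ V k y hymem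
    refine ⟨z, hzmem, ?_⟩
    have hxy : |x/δ - y/δ| ≤ (k:ℝ)*n := by
      rw [div_sub_div_same, abs_div, abs_of_pos hδ]
      rw [div_le_iff₀ hδ]
      calc |x - y| ≤ k*n*a^n := hyval
        _ = (k:ℝ)*n*δ := by rw [hδdef]
    calc |x/δ - (z:ℝ)| ≤ |x/δ - y/δ| + |y/δ - (z:ℝ)| := abs_sub_le _ _ _
      _ ≤ (k:ℝ)*n + k := add_le_add hxy hzval
      _ ≤ (W:ℝ) := by rw [hWdef]; push_cast; linarith
  -- count the net points
  set M : ℕ := 2*W+2 with hMdef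
  set J : ℕ := ⌊1/((M:ℝ) * δ)⌋₊ with hJdef
  have hJle : J ≤ (k • V').card := by
    have hMδ : (0:ℝ) < M * δ := by positivity
    have hchoice : ∀ j ∈ Finset.range J, ∃ z ∈ k • V', |((M:ℝ)*j) - (z:ℝ)| ≤ (W:ℝ) := by
      intro j hj
      rw [Finset.mem_range] at hj
      have hj' : (j:ℝ) ≤ (J:ℝ) - 1 := by
        have : (j:ℝ) + 1 ≤ (J:ℝ) := by exact_mod_cast Nat.succ_le_of_lt hj
        linarith
      have hJle' : (J:ℝ) ≤ 1/((M:ℝ)*δ) := Nat.floor_le (by positivity)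
      have hxle : (M:ℝ)*δ*j ≤ 1 := by
        calc (M:ℝ)*δ*j ≤ (M:ℝ)*δ*(1/((M:ℝ)*δ) - 1) := by
              apply mul_le_mul_of_nonneg_left (by linarith) hMδ.le
          _ = 1 - M*δ := by rw [mul_sub, mul_one, mul_one_div_cancel hMδ.ne']
          _ ≤ 1 := by linarith
      obtain ⟨z, hz, hzval⟩ := hnet ((M:ℝ)*δ*j) (by positivity) hxle
      refine ⟨z, hz, ?_⟩
      have : (M:ℝ)*δ*j/δ = (M:ℝ)*j := by field_simp
      rwa [this] at hzval
    choose f hfmem hfval using hchoice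
    rw [← Finset.card_range J]
    apply Finset.card_le_card_of_injOn (fun j => if h : j ∈ Finset.range J then f j h else 0)
    · intro j hj
      simp only [Finset.mem_coe] at hj ⊢
      simp only [hj, dif_pos]
      exact hfmem j hj
    · intro j₁ hj₁ j₂ hj₂ hfeq
      simp only [Finset.mem_coe] at hj₁ hj₂
      simp only [hj₁, hj₂, dif_pos] at hfeq
      by_contra hne
      have hv₁ := hfval j₁ hj₁
      have hv₂ := hfval j₂ hj₂
      rw [hfeq] at hv₁
      have habs : |((M:ℝ)*j₁) - ((M:ℝ)*j₂)| ≤ 2*W := by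
        calc |((M:ℝ)*j₁) - ((M:ℝ)*j₂)| ≤ |((M:ℝ)*j₁) - (f j₂ hj₂ : ℝ)| +
              |(f j₂ hj₂ : ℝ) - ((M:ℝ)*j₂)| := abs_sub_le _ _ _
          _ ≤ W + W := add_le_add hv₁ (by rw [abs_sub_comm]; exact hv₂)
          _ = 2*W := by ring
      have hge : (M:ℝ) ≤ |((M:ℝ)*j₁) - ((M:ℝ)*j₂)| := by
        rw [← mul_sub, abs_mul, abs_of_nonneg (by positivity : (0:ℝ) ≤ (M:ℝ))]
        have habs1 : (1:ℝ) ≤ |(j₁:ℝ) - (j₂:ℝ)| := by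
          rcases lt_or_gt_of_ne (show (j₁:ℝ) ≠ (j₂:ℝ) by exact_mod_cast hne) with h | h
          · rw [abs_sub_comm, abs_of_pos (by linarith)]
            have : (j₁:ℝ) + 1 ≤ (j₂:ℝ) := by
              exact_mod_cast Nat.succ_le_of_lt (show j₁ < j₂ by exact_mod_cast h)
            linarith
          · rw [abs_of_pos (by linarith)]
            have : (j₂:ℝ) + 1 ≤ (j₁:ℝ) := by
              exact_mod_cast Nat.succ_le_of_lt (show j₂ < j₁ by exact_mod_cast h)
            linarith
        nlinarith [Nat.cast_nonneg (α := ℝ) M]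
      have hMW : (2*W:ℝ) < M := by rw [hMdef]; push_cast; linarith
      linarith
  -- covering bound for S' + V'
  set N : ℕ := coverNumber (homCantor a + E) δ with hNdef
  have hCEsub : homCantor a + E ⊆ Set.Icc l (u + 1) := by
    rintro x ⟨c, hc, e, he, rfl⟩
    have hc' := homCantor_subset_Icc ha0 ha1 hc
    have he' := hElu he
    have hmem : l ≤ c + e ∧ c + e ≤ u + 1 :=
      ⟨by linarith [hc'.1, he'.1], by linarith [hc'.2, he'.2]⟩
    exact hmem
  obtain ⟨F, hFcard, hFcov⟩ := exists_optimal_cover δ hδ hCEsub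
  have hSVle : (S' + V').card ≤ 4 * N := by
    have hsub : S' + V' ⊆ F.biUnion (fun x => Finset.Icc ⌈(x - 2*δ)/δ⌉ (⌈(x - 2*δ)/δ⌉ + 3)) := by
      intro z hz
      obtain ⟨s', hs', v', hv', hzsum⟩ := Finset.mem_add.mp hz
      obtain ⟨s, hs, rfl⟩ := Finset.mem_image.mp hs'
      obtain ⟨v, hv, rfl⟩ := Finset.mem_image.mp hv'
      have hp : v + s ∈ homCantor a + E :=
        Set.add_mem_add (Vfin_subset_homCantor n v hv) (hSE hs)
      obtain ⟨x, hxF, hpx⟩ := Set.mem_iUnion₂.mp (hFcov hp)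
      have hfls := floor_mul_bounds (x := s) hδ
      have hflv := floor_mul_bounds (x := v) hδ
      have hzreal : (v + s) - 2*δ < δ * (z:ℝ) ∧ δ * (z:ℝ) ≤ v + s := by
        rw [← hzsum]
        push_cast
        constructor
        · nlinarith [hfls.1, hflv.1]
        · nlinarith [hfls.2, hflv.2]
      have hpmem : x ≤ v + s ∧ v + s ≤ x + δ := by
        simpa [Set.mem_Icc] using hpx
      refine Finset.mem_biUnion.mpr ⟨x, hxF, Finset.mem_Icc.mpr ⟨?_, ?_⟩⟩
      · -- ⌈(x - 2δ)/δ⌉ ≤ z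
        apply Int.ceil_le.mpr
        rw [div_le_iff₀ hδ]
        nlinarith [hzreal.1, hpmem.1]
      · -- z ≤ ⌈(x-2δ)/δ⌉ + 3
        have h1 : (z:ℝ) ≤ (x - 2*δ)/δ + 3 := by
          rw [div_add' _ _ _ hδ.ne', le_div_iff₀ hδ]
          nlinarith [hzreal.2, hpmem.2]
        have h2 : ((x - 2*δ)/δ : ℝ) ≤ ⌈(x - 2*δ)/δ⌉ := Int.le_ceil _
        have : (z:ℝ) ≤ (⌈(x - 2*δ)/δ⌉ : ℝ) + 3 := by linarith
        exact_mod_cast this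
    calc (S' + V').card ≤ (F.biUnion fun x => Finset.Icc ⌈(x - 2*δ)/δ⌉ (⌈(x - 2*δ)/δ⌉ + 3)).card :=
          Finset.card_le_card hsub
      _ ≤ ∑ x ∈ F, (Finset.Icc ⌈(x - 2*δ)/δ⌉ (⌈(x - 2*δ)/δ⌉ + 3)).card :=
          Finset.card_biUnion_le
      _ ≤ ∑ _x ∈ F, 4 := by
          apply Finset.sum_le_sum
          intro x _
          rw [Int.card_Icc]
          simp only [Int.toNat_le]
          omega
      _ = 4 * N := by rw [Finset.sum_const, hFcard]; ring
  -- chain everything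
  calc coverNumber E (8*a^n) ^ (k-1) * J
      ≤ S'.card ^ (k-1) * (k • V').card := by
        apply Nat.mul_le_mul
        · apply Nat.pow_le_pow_left
          rw [hS'card]
          exact hcovE
        · exact hJle
    _ = (k • V').card * S'.card ^ (k-1) := Nat.mul_comm _ _
    _ ≤ (S' + V').card ^ k := hpluN
    _ ≤ (4 * N) ^ k := Nat.pow_le_pow_left hSVle k
/-! ### Analytic preliminaries for the liminf -/

lemma eventually_log_le (α C : ℝ) (hα : 0 < α) :
    ∀ᶠ n : ℕ in atTop, C + Real.log ((n:ℝ)+1) ≤ α * n := by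
  have h1 : Tendsto (fun n : ℕ => ((n:ℝ)+1)) atTop atTop :=
    tendsto_atTop_add_const_right _ _ tendsto_natCast_atTop_atTop
  have hA : ∀ᶠ n : ℕ in atTop, Real.log ((n:ℝ)+1) ≤ α/2 * ((n:ℝ)+1) := by
    filter_upwards [h1.eventually (Real.isLittleO_log_id_atTop.def (by linarith : (0:ℝ) < α/2))]
      with n h
    have h' : |Real.log ((n:ℝ)+1)| ≤ α/2 * |(n:ℝ)+1| := by
      simpa [Real.norm_eq_abs] using h
    calc Real.log ((n:ℝ)+1) ≤ |Real.log ((n:ℝ)+1)| := le_abs_self _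
      _ ≤ α/2 * |(n:ℝ)+1| := h'
      _ = α/2 * ((n:ℝ)+1) := by
          rw [abs_of_pos (by positivity)]
  have hB : ∀ᶠ n : ℕ in atTop, C + α/2 ≤ α/2 * n := by
    refine eventually_atTop.mpr ⟨⌈(C + α/2)/(α/2)⌉₊ + 1, fun n hn => ?_⟩
    have h2 : ((C + α/2)/(α/2)) ≤ (⌈(C + α/2)/(α/2)⌉₊ : ℝ) := Nat.le_ceil _
    have h3 : ((⌈(C + α/2)/(α/2)⌉₊ : ℝ)) ≤ (n:ℝ) := by exact_mod_cast Nat.le_of_succ_le hn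
    have h4 : (C + α/2)/(α/2) ≤ (n:ℝ) := le_trans h2 h3
    calc C + α/2 = ((C + α/2)/(α/2)) * (α/2) := by field_simp
      _ ≤ (n:ℝ) * (α/2) := mul_le_mul_of_nonneg_right h4 (by linarith)
      _ = α/2 * n := by ring
  filter_upwards [hA, hB] with n h5 h6
  calc C + Real.log ((n:ℝ)+1) ≤ C + α/2 * ((n:ℝ)+1) := by linarith
    _ = (C + α/2) + α/2 * n := by ring
    _ ≤ α/2 * n + α/2 * n := by linarith
    _ = α * n := by ring

lemma f_isBoundedUnder_le {A : Set ℝ} {l u : ℝ} (hA : A ⊆ Set.Icc l u) (hne : A.Nonempty) :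
    IsBoundedUnder (· ≤ ·) (nhdsWithin (0:ℝ) (Set.Ioi 0))
      (fun δ => Real.log (coverNumber A δ) / Real.log (1/δ)) := by
  obtain ⟨e, he⟩ := hne
  have hlu : l ≤ u := le_trans (hA he).1 (hA he).2
  apply isBoundedUnder_of_eventually_le (a := 1 + max 0 (Real.log (u - l + 2)) / Real.log 2)
  refine Filter.eventually_of_mem (Ioo_mem_nhdsGT_of_mem (show (0:ℝ) ∈ Set.Ico (0:ℝ) (1/2) from ⟨le_refl _, by norm_num⟩)) ?_
  rintro δ ⟨h0, h12⟩
  have hlog2pos : (0:ℝ) < Real.log 2 := Real.log_pos (by norm_num)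
  have h2δ : (2:ℝ) ≤ 1/δ := by
    rw [le_div_iff₀ h0]; linarith
  have hlog2 : Real.log 2 ≤ Real.log (1/δ) := Real.log_le_log (by norm_num) h2δ
  have hlogpos : 0 < Real.log (1/δ) := lt_of_lt_of_le hlog2pos hlog2
  have hcn : coverNumber A δ ≤ ⌊(u - l)/δ⌋₊ + 1 := coverNumber_le_interval h0 hA
  have hcnR : (coverNumber A δ : ℝ) ≤ (u - l + 2)/δ := by
    have h1 : ((⌊(u - l)/δ⌋₊ : ℝ)) ≤ (u - l)/δ := Nat.floor_le (div_nonneg (by linarith) h0.le)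
    have h2 : (coverNumber A δ : ℝ) ≤ (⌊(u - l)/δ⌋₊ : ℝ) + 1 := by exact_mod_cast hcn
    have h3 : (1:ℝ) ≤ 2/δ := by rw [le_div_iff₀ h0]; linarith
    calc (coverNumber A δ : ℝ) ≤ (u - l)/δ + 1 := by linarith
      _ ≤ (u - l)/δ + 2/δ := by linarith
      _ = (u - l + 2)/δ := by ring
  have hone : (1:ℝ) ≤ (coverNumber A δ : ℝ) := by
    exact_mod_cast one_le_coverNumber h0 hA ⟨e, he⟩
  have hlogcn : Real.log (coverNumber A δ) ≤ Real.log (u - l + 2) + Real.log (1/δ) := by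
    calc Real.log (coverNumber A δ) ≤ Real.log ((u - l + 2)/δ) :=
          Real.log_le_log (by linarith) hcnR
      _ = Real.log ((u - l + 2) * (1/δ)) := by rw [div_eq_mul_one_div]
      _ = Real.log (u - l + 2) + Real.log (1/δ) :=
          Real.log_mul (by linarith) (by positivity)
  rw [div_le_iff₀ hlogpos]
  have hmax : Real.log (u - l + 2) ≤ max 0 (Real.log (u - l + 2)) := le_max_right _ _
  have hfrac : max 0 (Real.log (u - l + 2)) / Real.log 2 * Real.log (1/δ) ≥
      max 0 (Real.log (u - l + 2)) := by
    have h5 : (1:ℝ) ≤ Real.log (1/δ) / Real.log 2 := by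
      rw [le_div_iff₀ hlog2pos]; linarith
    have h6 : max 0 (Real.log (u - l + 2)) * 1 ≤
        max 0 (Real.log (u - l + 2)) * (Real.log (1/δ) / Real.log 2) :=
      mul_le_mul_of_nonneg_left h5 (le_max_left _ _)
    calc max 0 (Real.log (u - l + 2))
        = max 0 (Real.log (u - l + 2)) * 1 := by ring
      _ ≤ max 0 (Real.log (u - l + 2)) * (Real.log (1/δ) / Real.log 2) := h6
      _ = max 0 (Real.log (u - l + 2)) / Real.log 2 * Real.log (1/δ) := by ring
  calc Real.log (coverNumber A δ) ≤ Real.log (u - l + 2) + Real.log (1/δ) := hlogcn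
    _ ≤ max 0 (Real.log (u - l + 2)) + Real.log (1/δ) := by linarith
    _ ≤ max 0 (Real.log (u - l + 2)) / Real.log 2 * Real.log (1/δ) + Real.log (1/δ) := by
        linarith
    _ = (1 + max 0 (Real.log (u - l + 2)) / Real.log 2) * Real.log (1/δ) := by ring

lemma f_nonneg_ev {A : Set ℝ} {l u : ℝ} (hA : A ⊆ Set.Icc l u) (hne : A.Nonempty) :
    ∀ᶠ δ in nhdsWithin (0:ℝ) (Set.Ioi 0),
      0 ≤ Real.log (coverNumber A δ) / Real.log (1/δ) := by
  refine Filter.eventually_of_mem (Ioo_mem_nhdsGT_of_mem (show (0:ℝ) ∈ Set.Ico (0:ℝ) 1 from ⟨le_refl _, one_pos⟩)) ?_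
  rintro δ ⟨h0, h1⟩
  apply div_nonneg
  · apply Real.log_nonneg
    exact_mod_cast one_le_coverNumber h0 hA hne
  · apply Real.log_nonneg
    rw [le_div_iff₀ h0]; linarith

lemma lowerMinkDim_nonneg {A : Set ℝ} {l u : ℝ} (hA : A ⊆ Set.Icc l u) (hne : A.Nonempty) :
    0 ≤ lowerMinkDim A :=
  le_liminf_of_le ((f_isBoundedUnder_le hA hne).isCoboundedUnder_ge) (f_nonneg_ev hA hne)
/-! ### The main theorem -/

set_option maxHeartbeats 2000000 in
theorem stmt7 (a : ℝ) (ha0 : 0 < a) (ha1 : a < 1 / 2) (k : ℕ) (hk : 1 ≤ k)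
    (hka : (1 - a) / a ≤ (k : ℝ))
    (E : Set ℝ) (hEne : E.Nonempty) (hEc : IsCompact E) :
    1 / (k : ℝ) + (((k : ℝ) - 1) / k) * lowerMinkDim E ≤ lowerMinkDim (homCantor a + E) := by
  classical
  by_cases hk1 : k = 1
  · exfalso
    rw [hk1] at hka
    rw [div_le_iff₀ ha0] at hka
    push_cast at hka
    linarith
  have hk2 : 2 ≤ k := by omega
  have ha1' : a < 1 := by linarith
  have hka' : 1 - a ≤ (k:ℝ) * a := by
    rw [div_le_iff₀ ha0] at hka; linarith
  have hkR : (2:ℝ) ≤ (k:ℝ) := by exact_mod_cast hk2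
  have hkpos : (0:ℝ) < (k:ℝ) := by linarith
  -- bounds for E
  set l := sInf E with hldef
  set u := sSup E with hudef
  have hElu : E ⊆ Set.Icc l u := fun x hx => ⟨csInf_le hEc.bddBelow hx, le_csSup hEc.bddAbove hx⟩
  obtain ⟨e₀, he₀⟩ := hEne
  have hEne' : E.Nonempty := ⟨e₀, he₀⟩
  -- C+E facts
  have hCEne : (homCantor a + E).Nonempty :=
    ⟨0 + e₀, Set.add_mem_add (zero_mem_homCantor a) he₀⟩
  have hCEsub : homCantor a + E ⊆ Set.Icc l (u + 1) := by
    rintro x ⟨c, hc, e, he, rfl⟩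
    have hc' := homCantor_subset_Icc ha0 ha1' hc
    have he' := hElu he
    have hmem : l ≤ c + e ∧ c + e ≤ u + 1 :=
      ⟨by linarith [hc'.1, he'.1], by linarith [hc'.2, he'.2]⟩
    exact hmem
  set d := lowerMinkDim E with hddef
  set L := lowerMinkDim (homCantor a + E) with hLdef
  have hL0 : (0:ℝ) ≤ L := lowerMinkDim_nonneg hCEsub hCEne
  set θ : ℝ := ((k:ℝ)-1)/(k:ℝ) with hθdef
  have hθpos : 0 < θ := div_pos (by linarith) hkpos
  set R : ℝ := 1/(k:ℝ) + θ * d with hRdef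
  show R ≤ L
  by_contra hcon
  push_neg at hcon
  clear_value d L θ R
  set c : ℝ := (L+R)/2 with hcdef
  clear_value c
  have hcL : L < c := by rw [hcdef]; linarith
  have hcR : c < R := by rw [hcdef]; linarith
  have hc0 : 0 < c := lt_of_le_of_lt hL0 hcL
  suffices hfin : c ≤ L by linarith
  -- choose s < d with 1/k + θs = c + γ
  set γ : ℝ := (R - c)/2 with hγdef
  clear_value γ
  have hγpos : 0 < γ := by rw [hγdef]; linarith
  set s : ℝ := d - γ/θ with hsdef
  clear_value s
  have hsd : s < d := by
    rw [hsdef]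
    have := div_pos hγpos hθpos
    linarith
  have hc' : 1/(k:ℝ) + θ * s = c + γ := by
    have hθγ : θ * (γ/θ) = γ := mul_div_cancel₀ γ hθpos.ne'
    rw [hsdef, mul_sub, hθγ]
    have h1 : R = 1/(k:ℝ) + θ * d := hRdef
    have h2 : γ = (R - c)/2 := hγdef
    linarith
  set B : ℝ := ((k:ℝ)-1) * s with hBdef
  clear_value B
  have hkc' : 1 + B = (k:ℝ)*(c+γ) := by
    have h1 : (k:ℝ)*(1/(k:ℝ) + θ*s) = (k:ℝ)*(c+γ) := by rw [hc']
    have hkθ : (k:ℝ)*θ = (k:ℝ)-1 := by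
      rw [hθdef]; field_simp
    rw [mul_add, mul_one_div, div_self hkpos.ne', ← mul_assoc, hkθ] at h1
    rw [hBdef]
    linarith
  -- eventual lower bound on f_E from s < d = liminf
  have hbb : IsBoundedUnder (· ≥ ·) (nhdsWithin (0:ℝ) (Set.Ioi 0))
      (fun δ => Real.log (coverNumber E δ) / Real.log (1/δ)) :=
    isBoundedUnder_of_eventually_ge (f_nonneg_ev hElu hEne')
  have hsd' : s < lowerMinkDim E := by rw [← hddef]; exact hsd
  have hsev : ∀ᶠ δ in nhdsWithin (0:ℝ) (Set.Ioi 0),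
      s < Real.log (coverNumber E δ) / Real.log (1/δ) :=
    eventually_lt_of_lt_liminf hsd' hbb
  rw [eventually_nhdsWithin_iff, Metric.eventually_nhds_iff] at hsev
  obtain ⟨δ₁, hδ₁pos, hδ₁⟩ := hsev
  -- logarithmic constants
  set La : ℝ := -Real.log a with hLadef
  clear_value La
  have hlog2pos : (0:ℝ) < Real.log 2 := Real.log_pos (by norm_num)
  have hLa2 : Real.log 2 < La := by
    have h1 : Real.log a < Real.log (1/2) := Real.log_lt_log ha0 ha1
    have h2 : Real.log ((1:ℝ)/2) = -Real.log 2 := by rw [one_div, Real.log_inv]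
    rw [hLadef]; linarith [h1, h2.le, h2.ge]
  have hLapos : 0 < La := lt_trans hlog2pos hLa2
  -- eventual conditions on n
  have hEV1 : ∀ᶠ n : ℕ in atTop, a^n < min δ₁ 1 / 8 :=
    (tendsto_pow_atTop_nhds_zero_of_lt_one ha0.le ha1').eventually_lt_const
      (by positivity : (0:ℝ) < min δ₁ 1 / 8)
  have hEV2 : ∀ᶠ n : ℕ in atTop,
      (Real.log (16*(k:ℝ)) + Real.log 2) + Real.log ((n:ℝ)+1) ≤ La * n :=
    eventually_log_le La _ hLapos
  have hEV3 : ∀ᶠ n : ℕ in atTop,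
      (B*Real.log 8 + Real.log (32*(k:ℝ)) + (k:ℝ)*Real.log 4 + (k:ℝ)*c*La)
        + Real.log ((n:ℝ)+1) ≤ ((k:ℝ)*γ*La) * n :=
    eventually_log_le ((k:ℝ)*γ*La) _ (mul_pos (mul_pos hkpos hγpos) hLapos)
  have hEV4 : ∀ᶠ n : ℕ in atTop, 3 ≤ n := eventually_ge_atTop 3
  obtain ⟨N₀, hN₀⟩ := eventually_atTop.mp (((hEV1.and hEV2).and (hEV3.and hEV4)))
  set δ₀ : ℝ := a^(N₀+1) with hδ₀def
  -- the eventual bound for C+E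
  have hcb2 : IsCoboundedUnder (· ≥ ·) (nhdsWithin (0:ℝ) (Set.Ioi 0))
      (fun δ => Real.log (coverNumber (homCantor a + E) δ) / Real.log (1/δ)) :=
    (f_isBoundedUnder_le hCEsub hCEne).isCoboundedUnder_ge
  rw [hLdef]
  refine le_liminf_of_le hcb2 ?_
  refine Filter.eventually_of_mem (Ioo_mem_nhdsGT_of_mem
    (show (0:ℝ) ∈ Set.Ico (0:ℝ) δ₀ from ⟨le_refl _, by positivity⟩)) ?_
  rintro δ ⟨hδpos, hδlt⟩
  -- find the scale n with a^(n+1) < δ ≤ a^n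
  have hex : ∃ m : ℕ, a^(m+1) < δ := by
    obtain ⟨m, hm⟩ := exists_pow_lt_of_lt_one hδpos ha1'
    exact ⟨m, lt_of_le_of_lt (pow_le_pow_of_le_one ha0.le ha1'.le (by omega)) hm⟩
  set n := Nat.find hex with hndef
  have hn1 : a^(n+1) < δ := Nat.find_spec hex
  have hn2 : δ ≤ a^n := by
    rcases Nat.eq_zero_or_pos n with h0 | hpos
    · rw [h0, pow_zero]
      have hδ₀le : δ₀ ≤ 1 := by
        rw [hδ₀def]; exact pow_le_one₀ ha0.le ha1'.le
      linarith
    · have hmin := Nat.find_min hex (show n - 1 < n by omega)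
      rw [not_lt] at hmin
      rwa [show n - 1 + 1 = n by omega] at hmin
  have hnN₀ : N₀ ≤ n := by
    by_contra h
    push_neg at h
    have h1 : a^(N₀+1) ≤ a^(n+1) := pow_le_pow_of_le_one ha0.le ha1'.le (by omega)
    rw [hδ₀def] at hδlt
    linarith
  obtain ⟨⟨hev1, hev2⟩, hev3, hev4⟩ := hN₀ n hnN₀
  -- notation
  have hδn : (0:ℝ) < a^n := pow_pos ha0 n
  have hn3 : 3 ≤ n := hev4
  have hn1' : 1 ≤ n := by omega
  set m : ℕ := coverNumber E (8*a^n) with hmdef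
  set Nn : ℕ := coverNumber (homCantor a + E) (a^n) with hNndef
  set Nδ : ℕ := coverNumber (homCantor a + E) δ with hNδdef
  set Mn : ℕ := 2*(k*n+k+1)+2 with hMndef
  set J : ℕ := ⌊1/((Mn:ℝ) * a^n)⌋₊ with hJdef
  have hmain : m^(k-1) * J ≤ (4*Nn)^k :=
    main_count ha0 ha1 hk2 hka' hEne' hElu n hn1'
  have hm1 : 1 ≤ m := one_le_coverNumber (by positivity) hElu hEne'
  have hNn1 : 1 ≤ Nn := one_le_coverNumber hδn hCEsub hCEne
  have hNδ1 : 1 ≤ Nδ := one_le_coverNumber hδpos hCEsub hCEne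
  have hNle : Nn ≤ Nδ := coverNumber_anti hδpos hn2 hCEsub
  clear_value m Nn Nδ J n
  -- bound on Mn
  have hnR0 : (0:ℝ) ≤ (n:ℝ) := Nat.cast_nonneg n
  have hMnle : (Mn:ℝ) ≤ 16*(k:ℝ)*((n:ℝ)+1) := by
    have hkn : (0:ℝ) ≤ (k:ℝ)*(n:ℝ) := mul_nonneg hkpos.le hnR0
    rw [hMndef]; push_cast
    nlinarith [hkn, hkR, hnR0]
  have hMnpos : (0:ℝ) < (Mn:ℝ) := by
    have : 0 < Mn := by rw [hMndef]; omega
    exact_mod_cast this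
  -- Mn * a^n ≤ 1/2
  have hprod : (Mn:ℝ) * a^n ≤ 1/2 := by
    have hP : (0:ℝ) < 16*(k:ℝ)*((n:ℝ)+1) := by positivity
    have hlogP : Real.log ((16*(k:ℝ)*((n:ℝ)+1)) * a^n) ≤ Real.log (1/2) := by
      rw [Real.log_mul hP.ne' (pow_pos ha0 n).ne', Real.log_mul (by positivity) (by positivity),
        Real.log_pow]
      have hl12 : Real.log ((1:ℝ)/2) = -Real.log 2 := by rw [one_div, Real.log_inv]
      have hnla : (n:ℝ) * Real.log a = -(La * n) := by rw [hLadef]; ring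
      rw [hl12, hnla]
      linarith [hev2]
    have h16 : (16*(k:ℝ)*((n:ℝ)+1)) * a^n ≤ 1/2 :=
      (Real.log_le_log_iff (by positivity) (by norm_num)).mp hlogP
    calc (Mn:ℝ) * a^n ≤ (16*(k:ℝ)*((n:ℝ)+1)) * a^n := mul_le_mul_of_nonneg_right hMnle hδn.le
      _ ≤ 1/2 := h16
  -- J facts
  have hMa : (0:ℝ) < (Mn:ℝ)*a^n := by positivity
  have hx2 : (2:ℝ) ≤ 1/((Mn:ℝ)*a^n) := by
    rw [le_div_iff₀ hMa]; linarith
  have hJge : 1/((Mn:ℝ)*a^n) / 2 ≤ (J:ℝ) := by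
    have h1 := Nat.sub_one_lt_floor (1/((Mn:ℝ)*a^n))
    rw [hJdef]
    have h2 : 1/((Mn:ℝ)*a^n) - 1 ≥ 1/((Mn:ℝ)*a^n)/2 := by linarith
    linarith
  have hJ1 : 1 ≤ J := by
    have h1 : (1:ℝ) ≤ (J:ℝ) := by
      have := hJge
      linarith
    exact_mod_cast h1
  -- lower bound for log m
  have h8an1 : 8*a^n < δ₁ := by
    have h1 : min δ₁ 1 ≤ δ₁ := min_le_left _ _
    have h2 := hev1
    linarith
  have h8anpos : (0:ℝ) < 8*a^n := by positivity
  have hLδ'val : Real.log (1/(8*a^n)) = (n:ℝ)*La - Real.log 8 := by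
    rw [one_div, Real.log_inv, Real.log_mul (by norm_num) (pow_pos ha0 n).ne', Real.log_pow,
      hLadef]
    ring
  have hlog8 : Real.log 8 = 3 * Real.log 2 := by
    rw [show (8:ℝ) = 2^3 by norm_num, Real.log_pow]
    push_cast; ring
  have hLδ'pos : 0 < (n:ℝ)*La - Real.log 8 := by
    have h3n : (3:ℝ) ≤ (n:ℝ) := by exact_mod_cast hn3
    have h3La : 3*La ≤ (n:ℝ)*La := mul_le_mul_of_nonneg_right h3n hLapos.le
    rw [hlog8]
    linarith [hLa2]
  have hlogm : s * ((n:ℝ)*La - Real.log 8) ≤ Real.log m := by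
    have hfE := hδ₁ (show dist (8*a^n) (0:ℝ) < δ₁ by
      rw [Real.dist_eq, sub_zero, abs_of_pos h8anpos]; exact h8an1) h8anpos
    rw [hLδ'val] at hfE
    have := (lt_div_iff₀ hLδ'pos).mp hfE
    rw [hmdef]
    linarith
  -- lower bound for log J
  have hlogJ : (n:ℝ)*La - Real.log (2*(Mn:ℝ)) ≤ Real.log J := by
    have heq : 1/((Mn:ℝ)*a^n)/2 = 1/((2*(Mn:ℝ))*a^n) := by
      field_simp
    have h1 : Real.log (1/((2*(Mn:ℝ))*a^n)) ≤ Real.log J := by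
      rw [← heq]
      exact Real.log_le_log (by positivity) hJge
    have h2 : Real.log (1/((2*(Mn:ℝ))*a^n)) = (n:ℝ)*La - Real.log (2*(Mn:ℝ)) := by
      rw [one_div, Real.log_inv, Real.log_mul (by positivity) (pow_pos ha0 n).ne',
        Real.log_pow, hLadef]
      ring
    linarith
  -- the main inequality in logs
  have hmR : (1:ℝ) ≤ (m:ℝ) := by exact_mod_cast hm1
  have hJR : (1:ℝ) ≤ (J:ℝ) := by exact_mod_cast hJ1
  have hNnR : (1:ℝ) ≤ (Nn:ℝ) := by exact_mod_cast hNn1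
  have hNδR : (1:ℝ) ≤ (Nδ:ℝ) := by exact_mod_cast hNδ1
  have hlogmain : ((k:ℝ)-1)*Real.log m + Real.log J ≤ (k:ℝ)*(Real.log 4 + Real.log Nn) := by
    have hmainR : ((m:ℝ)^(k-1) * (J:ℝ)) ≤ ((4:ℝ)*(Nn:ℝ))^k := by
      have := hmain
      have hcast : (((m^(k-1) * J : ℕ)):ℝ) ≤ (((4*Nn)^k : ℕ):ℝ) := by exact_mod_cast this
      push_cast at hcast
      exact hcast
    have hlhs : Real.log ((m:ℝ)^(k-1) * (J:ℝ)) = ((k:ℝ)-1)*Real.log m + Real.log J := by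
      rw [Real.log_mul (by positivity) (by linarith), Real.log_pow]
      have : ((k-1 : ℕ):ℝ) = (k:ℝ)-1 := by
        push_cast [Nat.cast_sub hk]; ring
      rw [this]
    have hrhs : Real.log (((4:ℝ)*(Nn:ℝ))^k) = (k:ℝ)*(Real.log 4 + Real.log Nn) := by
      rw [Real.log_pow, Real.log_mul (by norm_num) (by linarith)]
    rw [← hlhs, ← hrhs]
    exact Real.log_le_log (by positivity) hmainR
  -- bound log(2 Mn)
  have hlog2Mn : Real.log (2*(Mn:ℝ)) ≤ Real.log (32*(k:ℝ)) + Real.log ((n:ℝ)+1) := by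
    have h2Mn : 2*(Mn:ℝ) ≤ 32*(k:ℝ)*((n:ℝ)+1) := by linarith [hMnle]
    calc Real.log (2*(Mn:ℝ)) ≤ Real.log (32*(k:ℝ)*((n:ℝ)+1)) :=
          Real.log_le_log (by positivity) h2Mn
      _ = Real.log (32*(k:ℝ)) + Real.log ((n:ℝ)+1) :=
          Real.log_mul (by positivity) (by positivity)
  -- combine: k*c*(n+1)*La ≤ k * log Nn
  have hstep : B*((n:ℝ)*La - Real.log 8) + ((n:ℝ)*La - Real.log (2*(Mn:ℝ)))
      ≤ ((k:ℝ)-1)*Real.log m + Real.log J := by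
    have h1 : B*((n:ℝ)*La - Real.log 8) ≤ ((k:ℝ)-1)*Real.log m := by
      rw [hBdef, mul_assoc]
      exact mul_le_mul_of_nonneg_left hlogm (by linarith)
    linarith
  have hsubst : (1 + B)*((n:ℝ)*La) = (k:ℝ)*(c+γ)*((n:ℝ)*La) := by rw [hkc']
  have hfinal : (k:ℝ)*c*((n:ℝ)+1)*La ≤ (k:ℝ)*Real.log Nn := by
    have h1 : B*((n:ℝ)*La - Real.log 8) + ((n:ℝ)*La - Real.log (2*(Mn:ℝ)))
        ≤ (k:ℝ)*(Real.log 4 + Real.log Nn) := le_trans hstep hlogmain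
    have hring : B*((n:ℝ)*La - Real.log 8) + ((n:ℝ)*La - Real.log (2*(Mn:ℝ)))
        = (1+B)*((n:ℝ)*La) - B*Real.log 8 - Real.log (2*(Mn:ℝ)) := by ring
    rw [hring, hsubst] at h1
    linarith [h1, hev3, hlog2Mn]
  -- conclude: c ≤ f_{C+E} δ
  have hlogNδ : Real.log Nn ≤ Real.log Nδ :=
    Real.log_le_log (by linarith) (by exact_mod_cast hNle)
  have hlogδle : Real.log (1/δ) ≤ ((n:ℝ)+1)*La := by
    rw [one_div, Real.log_inv]
    have h1 : Real.log (a^(n+1)) ≤ Real.log δ := Real.log_le_log (pow_pos ha0 (n+1)) hn1.le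
    rw [Real.log_pow] at h1
    push_cast at h1
    rw [hLadef]
    linarith [h1]
  have hlogδpos : 0 < Real.log (1/δ) := by
    apply Real.log_pos
    rw [lt_div_iff₀ hδpos, one_mul]
    calc δ ≤ a^n := hn2
      _ < 1 := pow_lt_one₀ ha0.le ha1' (by omega)
  rw [le_div_iff₀ hlogδpos]
  calc c * Real.log (1/δ) ≤ c * (((n:ℝ)+1)*La) := mul_le_mul_of_nonneg_left hlogδle hc0.le
    _ ≤ Real.log Nn := by
        apply le_of_mul_le_mul_left ?_ hkpos
        calc (k:ℝ) * (c * (((n:ℝ)+1)*La)) = (k:ℝ)*c*((n:ℝ)+1)*La := by ring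
          _ ≤ (k:ℝ)*Real.log Nn := hfinal
          _ = (k:ℝ) * Real.log Nn := rfl
    _ ≤ Real.log Nδ := hlogNδ
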